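/- Let k ≥ 3. Then for all n ≥ 2, r_n^(k) = Σ_{j=1}^{k} r_{n−j}^(k) − Σ_{j=k+1}^{2k−1} r_{n−j}^(k), where by convention r_0^(k) = 1, r_1^(k) = 0 and r_j^(k) = 0 for j < 0. -/

import Mathlib

/-- A binary string (list of booleans, `false` = 0, `true` = 1) avoids `0^k`
and `1^k`, i.e. it contains neither `k` consecutive 0's nor `k` consecutive 1's. -/
def Avoids (k : ℕ) (s : List Bool) : Prop :=
  ¬ (List.replicate k false <:+: s) ∧ ¬ (List.replicate k true <:+: s)
/-- `rcount k n = r_n^(k)`: the number of binary strings of length `n` starting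
with 0, ending with 1 and avoiding `0^k` and `1^k` (the empty string counts,
so `rcount k 0 = 1`). -/
noncomputable def rcount (k n : ℕ) : ℕ :=
  Set.ncard {s : List Bool | s.length = n ∧ Avoids k s ∧
    s.head? ≠ some true ∧ s.getLast? ≠ some false}
/-- `r_n^(k)` extended to integer indices by the convention `r_j^(k) = 0` for `j < 0`. -/
noncomputable def rZ (k : ℕ) (n : ℤ) : ℤ :=
  if n < 0 then 0 else rcount k n.toNat

namespace RProof

open List

/-- Split off the maximal leading run of `c`'s. -/
lemma exists_split (c : Bool) (s : List Bool) :
    ∃ a t, s = replicate a c ++ t ∧ t.head? ≠ some c := by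
  induction s with
  | nil => exact ⟨0, [], rfl, by simp⟩
  | cons x s ih =>
    by_cases hx : x = c
    · obtain ⟨a, t, h1, h2⟩ := ih
      exact ⟨a + 1, t, by simp [replicate_succ, hx, h1], h2⟩
    · exact ⟨0, x :: s, rfl, by simpa using hx⟩

lemma head?_replicate_append {c : Bool} {a : ℕ} (ha : 1 ≤ a) (t : List Bool) :
    (replicate a c ++ t).head? = some c := by
  obtain ⟨a, rfl⟩ := Nat.exists_eq_add_of_le ha
  simp [replicate_add, replicate_succ]

lemma getLast?_replicate {c : Bool} {a : ℕ} (ha : 1 ≤ a) :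
    (replicate a c).getLast? = some c := by
  obtain ⟨a, rfl⟩ := Nat.exists_eq_add_of_le ha
  rw [Nat.add_comm, replicate_succ', getLast?_append]
  simp

/-- Uniqueness of the maximal-run decomposition. -/
lemma split_unique (c : Bool) :
    ∀ (a a' : ℕ) (t t' : List Bool), t.head? ≠ some c → t'.head? ≠ some c →
      replicate a c ++ t = replicate a' c ++ t' → a = a' ∧ t = t' := by
  intro a
  induction a with
  | zero =>
    intro a' t t' ht ht' h
    cases a' with
    | zero => simpa using h
    | succ a' =>
      exfalso
      simp only [replicate_zero, nil_append] at h
      rw [h, head?_replicate_append (by omega)] at ht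
      exact ht rfl
  | succ a ih =>
    intro a' t t' ht ht' h
    cases a' with
    | zero =>
      exfalso
      simp only [replicate_zero, nil_append] at h
      rw [← h, head?_replicate_append (by omega)] at ht'
      exact ht' rfl
    | succ a' =>
      simp only [replicate_succ, cons_append, cons.injEq] at h
      obtain ⟨h1, h2⟩ := ih a' t t' ht ht' h.2
      exact ⟨by omega, h2⟩

lemma prefix_bound {c : Bool} {k a : ℕ} {t : List Bool} (ht : t.head? ≠ some c)
    (h : replicate k c <+: replicate a c ++ t) : k ≤ a := by
  by_contra hka
  push_neg at hka
  have hrep : replicate k c = replicate a c ++ replicate (k - a) c := by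
    rw [← replicate_add, Nat.add_sub_cancel' (le_of_lt hka)]
  rw [hrep, prefix_append_right_inj] at h
  obtain ⟨r, hr⟩ := h
  rw [← hr, head?_replicate_append (by omega)] at ht
  exact ht rfl

lemma infix_run {c : Bool} {k : ℕ} {t : List Bool} (ht : t.head? ≠ some c) :
    ∀ (a : ℕ), replicate k c <:+: replicate a c ++ t → k ≤ a ∨ replicate k c <:+: t := by
  intro a
  induction a with
  | zero => intro h; right; simpa using h
  | succ a ih =>
    intro h
    rw [replicate_succ, cons_append, infix_cons_iff] at h
    rcases h with h | h
    · left
      have : replicate k c <+: replicate (a + 1) c ++ t := by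
        rwa [replicate_succ, cons_append]
      exact prefix_bound ht this
    · rcases ih h with h' | h'
      · left; omega
      · right; exact h'

lemma infix_skip {c : Bool} {k : ℕ} (hk : k ≠ 0) {t : List Bool} :
    ∀ (b : ℕ), replicate k c <:+: replicate b (!c) ++ t → replicate k c <:+: t := by
  intro b
  induction b with
  | zero => intro h; simpa using h
  | succ b ih =>
    intro h
    rw [replicate_succ, cons_append, infix_cons_iff] at h
    rcases h with h | h
    · exfalso
      obtain ⟨k', rfl⟩ := Nat.exists_eq_add_of_le (Nat.one_le_iff_ne_zero.mpr hk)
      rw [Nat.add_comm, replicate_succ] at h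
      obtain ⟨r, hr⟩ := h
      simp only [cons_append, cons.injEq] at hr
      exact absurd hr.1 (by cases c <;> simp)
    · exact ih h

def T (k n : ℕ) : Set (List Bool) :=
  {s : List Bool | s.length = n ∧ Avoids k s ∧ s.head? ≠ some true ∧ s.getLast? ≠ some false}

lemma T_finite (k n : ℕ) : (T k n).Finite :=
  (List.finite_length_eq Bool n).subset fun _ hs => hs.1

noncomputable def TF (k n : ℕ) : Finset (List Bool) := (T_finite k n).toFinset

lemma mem_TF {k n : ℕ} {s : List Bool} : s ∈ TF k n ↔ s ∈ T k n := Set.Finite.mem_toFinset _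

lemma rcount_eq (k n : ℕ) : rcount k n = (TF k n).card :=
  Set.ncard_eq_toFinset_card _ (T_finite k n)

/-- Membership: prepending a `0`-block and a `1`-block. -/
lemma mem_T_append {k a b m : ℕ} (hk : 3 ≤ k) (ha : 1 ≤ a) (ha' : a ≤ k - 1)
    (hb : 1 ≤ b) (hb' : b ≤ k - 1) {t : List Bool} (htm : t ∈ T k m) :
    (replicate a false ++ (replicate b true ++ t)) ∈ T k (a + b + m) := by
  obtain ⟨hlen, ⟨hav0, hav1⟩, hhead, hlast⟩ := htm
  have hbt_head : (replicate b true ++ t).head? = some true := head?_replicate_append hb t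
  refine ⟨by simp [hlen]; omega, ⟨?_, ?_⟩, ?_, ?_⟩
  · intro h
    rcases infix_run (c := false) (by simp [hbt_head]) a h with h' | h'
    · omega
    · exact hav0 (infix_skip (c := false) (by omega) b (by simpa using h'))
  · intro h
    have h' : replicate k true <:+: replicate b true ++ t :=
      infix_skip (c := true) (by omega) a (by simpa using h)
    rcases infix_run (c := true) hhead b h' with h'' | h'' 
    · omega
    · exact hav1 h''
  · rw [head?_replicate_append ha]; simp
  · rw [getLast?_append, getLast?_append]
    cases hto : t.getLast? with
    | none => simp [getLast?_replicate hb]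
    | some x =>
      simp only [Option.some_or]
      rw [hto] at hlast
      simpa using hlast

/-- Decomposition of a nonempty element of `T k n`. -/
lemma decomp {k n : ℕ} (hk : 3 ≤ k) (hn : 1 ≤ n) {s : List Bool} (hs : s ∈ T k n) :
    ∃ a b t, 1 ≤ a ∧ a ≤ k - 1 ∧ 1 ≤ b ∧ b ≤ k - 1 ∧ a + b ≤ n ∧
      t ∈ T k (n - a - b) ∧ s = replicate a false ++ (replicate b true ++ t) := by
  obtain ⟨hlen, ⟨hav0, hav1⟩, hhead, hlast⟩ := hs
  have hsne : s ≠ [] := by intro h; rw [h] at hlen; simp at hlen; omega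
  have hshead : s.head? = some false := by
    cases hh : s.head? with
    | none => exact absurd (head?_eq_none_iff.mp hh) hsne
    | some x =>
      cases x
      · rfl
      · exact absurd hh hhead
  obtain ⟨a, u, hsu, hu⟩ := exists_split false s
  have ha1 : 1 ≤ a := by
    rcases Nat.eq_zero_or_pos a with h | h
    · exfalso; subst h; simp at hsu; rw [← hsu] at hu; exact hu hshead
    · exact h
  have hune : u ≠ [] := by
    intro h
    rw [h, append_nil] at hsu
    rw [hsu, getLast?_replicate ha1] at hlast
    exact hlast rfl
  have huhead : u.head? = some true := by
    cases hh : u.head? with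
    | none => exact absurd (head?_eq_none_iff.mp hh) hune
    | some x =>
      cases x
      · exact absurd hh hu
      · rfl
  obtain ⟨b, t, hut, ht⟩ := exists_split true u
  have hb1 : 1 ≤ b := by
    rcases Nat.eq_zero_or_pos b with h | h
    · exfalso; subst h; simp at hut; rw [← hut] at ht; exact ht huhead
    · exact h
  have hsfull : s = replicate a false ++ (replicate b true ++ t) := by rw [hsu, hut]
  have hlen' : a + b + t.length = n := by
    rw [hsfull] at hlen; simp at hlen; omega
  -- a ≤ k - 1
  have hak : a ≤ k - 1 := by
    by_contra h
    push_neg at h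
    apply hav0
    apply List.IsPrefix.isInfix
    rw [hsfull]
    have : replicate a false = replicate k false ++ replicate (a - k) false := by
      rw [← replicate_add, Nat.add_sub_cancel' (by omega)]
    rw [this, append_assoc]
    exact ⟨_, rfl⟩
  have hbk : b ≤ k - 1 := by
    by_contra h
    push_neg at h
    apply hav1
    have h1 : replicate k true <+: replicate b true ++ t := by
      have : replicate b true = replicate k true ++ replicate (b - k) true := by
        rw [← replicate_add, Nat.add_sub_cancel' (by omega)]
      rw [this, append_assoc]
      exact ⟨_, rfl⟩
    have h2 : replicate b true ++ t <:+ s := by rw [hsfull]; exact ⟨_, rfl⟩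
    exact h1.isInfix.trans h2.isInfix
  have htinf : t <:+ s := by
    rw [hsfull, ← append_assoc]; exact ⟨_, rfl⟩
  refine ⟨a, b, t, ha1, hak, hb1, hbk, by omega, ⟨by omega, ⟨?_, ?_⟩, ht, ?_⟩, hsfull⟩
  · exact fun h => hav0 (h.trans htinf.isInfix)
  · exact fun h => hav1 (h.trans htinf.isInfix)
  · rcases eq_or_ne t [] with h | h
    · simp [h]
    · have : s.getLast? = t.getLast? := by
        rw [hsfull, getLast?_append, getLast?_append]
        cases hto : t.getLast? with
        | none => exact absurd (getLast?_eq_none_iff.mp hto) h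
        | some x => simp
      rwa [← this]

lemma TF_eq (k n : ℕ) (hk : 3 ≤ k) (hn : 1 ≤ n) :
    TF k n = ((Finset.Icc 1 (k-1) ×ˢ Finset.Icc 1 (k-1)).filter (fun p => p.1 + p.2 ≤ n)).biUnion
      (fun p => (TF k (n - p.1 - p.2)).image
        (fun t => replicate p.1 false ++ (replicate p.2 true ++ t))) := by
  ext s
  simp only [Finset.mem_biUnion, Finset.mem_filter, Finset.mem_product, Finset.mem_Icc,
    Finset.mem_image, mem_TF]
  constructor
  · intro hs
    obtain ⟨a, b, t, h1, h2, h3, h4, h5, h6, h7⟩ := decomp hk hn hs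
    exact ⟨(a, b), ⟨⟨⟨h1, h2⟩, ⟨h3, h4⟩⟩, h5⟩, t, mem_TF.mp (mem_TF.mpr h6), h7.symm⟩
  · rintro ⟨⟨a, b⟩, ⟨⟨⟨h1, h2⟩, ⟨h3, h4⟩⟩, h5⟩, t, ht, rfl⟩
    have := mem_T_append hk h1 h2 h3 h4 ht
    have heq : a + b + (n - a - b) = n := by omega
    rwa [heq] at this

lemma rcount_rec (k n : ℕ) (hk : 3 ≤ k) (hn : 1 ≤ n) :
    rcount k n = ∑ p ∈ Finset.Icc 1 (k-1) ×ˢ Finset.Icc 1 (k-1),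
      (if p.1 + p.2 ≤ n then rcount k (n - p.1 - p.2) else 0) := by
  rw [rcount_eq, TF_eq k n hk hn, Finset.card_biUnion]
  · rw [← Finset.sum_filter]
    apply Finset.sum_congr rfl
    intro p _
    rw [Finset.card_image_of_injective _ (fun x y h => by
      have := append_cancel_left h
      exact append_cancel_left this), rcount_eq]
  · intro p hp q hq hpq
    simp only [Finset.mem_coe, Finset.mem_filter, Finset.mem_product, Finset.mem_Icc] at hp hq
    rw [Function.onFun, Finset.disjoint_left]
    rintro s hs1 hs2
    simp only [Finset.mem_image, mem_TF] at hs1 hs2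
    obtain ⟨t, ht, hts⟩ := hs1
    obtain ⟨t', ht', hts'⟩ := hs2
    rw [← hts'] at hts
    have h1 := split_unique false p.1 q.1 _ _
      (by rw [head?_replicate_append hp.1.2.1]; simp)
      (by rw [head?_replicate_append hq.1.2.1]; simp) hts
    have h2 := split_unique true p.2 q.2 t t' ht.2.2.1 ht'.2.2.1 h1.2
    exact hpq (Prod.ext h1.1 h2.1)

lemma rZ_rec (k : ℕ) (hk : 3 ≤ k) (n : ℤ) (hn : 1 ≤ n) :
    rZ k n = ∑ a ∈ Finset.Icc 1 (k-1), ∑ b ∈ Finset.Icc 1 (k-1), rZ k (n - a - b) := by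
  have hn0 : ¬ n < 0 := by omega
  simp only [rZ, if_neg hn0]
  rw [rcount_rec k n.toNat hk (by omega)]
  push_cast
  rw [Finset.sum_product]
  apply Finset.sum_congr rfl; intro a _
  apply Finset.sum_congr rfl; intro b _
  show (if a + b ≤ n.toNat then ((rcount k (n.toNat - a - b) : ℤ)) else 0)
      = rZ k (n - ↑a - ↑b)
  split_ifs with h
  · rw [rZ, if_neg (by omega)]
    congr 2
    omega
  · rw [rZ, if_pos (by omega)]

lemma E1 (k : ℕ) (hk : 3 ≤ k) (m : ℤ) :
    ∑ b ∈ Finset.Icc 2 k, rZ k (m - b) = ∑ b ∈ Finset.Icc 1 (k-1), rZ k (m - 1 - b) := by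
  have hmap : (Finset.Icc 1 (k-1)).map (addRightEmbedding 1) = Finset.Icc 2 k := by
    rw [Finset.map_add_right_Icc]; congr 1 <;> omega
  rw [← hmap, Finset.sum_map]
  apply Finset.sum_congr rfl
  intro b _
  simp only [addRightEmbedding_apply]
  congr 1
  push_cast
  ring

end RProof

open RProof

/-- The recurrence `r_n^(k) = Σ_{j=1}^{k} r_{n−j}^(k) − Σ_{j=k+1}^{2k−1} r_{n−j}^(k)`. -/
theorem rcount_recurrence' (k : ℕ) (hk : 3 ≤ k) :
    ∀ n : ℤ, 2 ≤ n →
      rZ k n = ∑ j ∈ Finset.Icc 1 k, rZ k (n - j)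
             - ∑ j ∈ Finset.Icc (k + 1) (2*k - 1), rZ k (n - j) := by
  intro n hn
  have recn := rZ_rec k hk n (by omega)
  have recn1 := rZ_rec k hk (n - 1) (by omega)
  have hT1 : ∑ j ∈ Finset.Icc 1 k, rZ k (n - j)
      = rZ k (n - 1) + ∑ j ∈ Finset.Icc 2 k, rZ k (n - j) := by
    have i : Finset.Icc 1 k = insert 1 (Finset.Icc 2 k) := by ext x; simp; omega
    rw [i, Finset.sum_insert (by simp)]
    push_cast
    ring
  have hT2 : ∑ j ∈ Finset.Icc (k + 1) (2*k - 1), rZ k (n - j)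
      = ∑ a ∈ Finset.Icc 1 (k-1), rZ k (n - a - k) := by
    have hmap : (Finset.Icc 1 (k-1)).map (addRightEmbedding k) = Finset.Icc (k+1) (2*k-1) := by
      rw [Finset.map_add_right_Icc]; congr 1 <;> omega
    rw [← hmap, Finset.sum_map]
    apply Finset.sum_congr rfl
    intro a _
    simp only [addRightEmbedding_apply]
    congr 1
    push_cast
    ring
  have tele : ∀ m : ℤ, ∑ b ∈ Finset.Icc 1 (k-1), rZ k (m - b) + rZ k (m - k)
      = ∑ b ∈ Finset.Icc 2 k, rZ k (m - b) + rZ k (m - 1) := by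
    intro m
    have i1 : Finset.Icc 1 (k-1) = insert 1 (Finset.Icc 2 (k-1)) := by ext x; simp; omega
    have i2 : Finset.Icc 2 k = insert k (Finset.Icc 2 (k-1)) := by ext x; simp; omega
    rw [i1, i2, Finset.sum_insert (by simp), Finset.sum_insert (by simp; omega)]
    push_cast
    ring
  have h2 : (∑ a ∈ Finset.Icc 1 (k-1), ∑ b ∈ Finset.Icc 1 (k-1), rZ k (n - a - b))
        + ∑ a ∈ Finset.Icc 1 (k-1), rZ k (n - a - k)
      = (∑ a ∈ Finset.Icc 1 (k-1), ∑ b ∈ Finset.Icc 1 (k-1), rZ k (n - 1 - a - b))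
        + ∑ a ∈ Finset.Icc 1 (k-1), rZ k (n - a - 1) := by
    rw [← Finset.sum_add_distrib, ← Finset.sum_add_distrib]
    apply Finset.sum_congr rfl
    intro a _
    rw [tele (n - a), E1 k hk (n - a)]
    congr 1
    apply Finset.sum_congr rfl
    intro b _
    congr 1
    ring
  have h3 : ∑ a ∈ Finset.Icc 1 (k-1), rZ k (n - a - 1)
      = ∑ j ∈ Finset.Icc 2 k, rZ k (n - j) := by
    rw [E1 k hk n]
    apply Finset.sum_congr rfl
    intro a _
    congr 1
    ring
  rw [recn, hT1, hT2, recn1]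
  linarith [h2, h3]
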